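/- Let s be a similarity function with values in ℕ and let h_i(G), for i = 0, …, s(G), be graph parameters with values in ℕ, and set P(G;X) = ∑_{i=0}^{s(G)} h_i(G) X^i. Define P₃(G;X) = ∏_{i=0}^{s(G)} (X − i)^{h_i(G)+1}. Then P₃ is d.p.-equivalent to P, and for every graph G every complex root of P₃(G;X) is a nonnegative integer (in particular real). -/

import Mathlib

open Polynomial

noncomputable def numEdges {n : ℕ} (G : SimpleGraph (Fin n)) : ℕ := G.edgeSet.ncard

noncomputable def numComponents {n : ℕ} (G : SimpleGraph (Fin n)) : ℕ :=
  Nat.card G.ConnectedComponent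

def GraphSimilar {n₁ n₂ : ℕ} (G₁ : SimpleGraph (Fin n₁)) (G₂ : SimpleGraph (Fin n₂)) : Prop :=
  n₁ = n₂ ∧ numEdges G₁ = numEdges G₂ ∧ numComponents G₁ = numComponents G₂

def IsGraphPolynomial (P : ∀ n : ℕ, SimpleGraph (Fin n) → Polynomial ℤ) : Prop :=
  ∀ (n : ℕ) (G H : SimpleGraph (Fin n)), Nonempty (G ≃g H) → P n G = P n H

def DPEquiv (P Q : ∀ n : ℕ, SimpleGraph (Fin n) → Polynomial ℤ) : Prop :=
  ∀ (n₁ n₂ : ℕ) (G₁ : SimpleGraph (Fin n₁)) (G₂ : SimpleGraph (Fin n₂)),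
    GraphSimilar G₁ G₂ → (P n₁ G₁ = P n₂ G₂ ↔ Q n₁ G₁ = Q n₂ G₂)

lemma key_count (t : ℕ) (e : ℕ → ℕ) (j : ℕ) (hj : j ∈ Finset.range t) :
    (∏ i ∈ Finset.range t, (X - C (i:ℤ)) ^ (e i)).roots.count (j:ℤ) = e j := by
  have hne : (∏ i ∈ Finset.range t, (X - C (i:ℤ)) ^ (e i)) ≠ 0 := by
    apply Finset.prod_ne_zero_iff.2
    intro i _
    exact pow_ne_zero _ (X_sub_C_ne_zero _)
  rw [roots_prod _ _ hne, Multiset.count_bind]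
  simp only [roots_pow, roots_X_sub_C]
  have h1 : ((Finset.range t).val.map fun i => Multiset.count (j:ℤ) ((e i) • ({(i:ℤ)} : Multiset ℤ)))
      = (Finset.range t).val.map fun i => if i = j then e i else 0 := by
    apply Multiset.map_congr rfl
    intro i _
    simp only [Multiset.count_nsmul, Multiset.count_singleton]
    by_cases hij : i = j
    · simp [hij]
    · have : ((j:ℤ) = (i:ℤ)) = False := by
        simp; exact fun hh => hij hh.symm
      simp [this, hij]
  rw [h1]
  have : ((Finset.range t).val.map fun i => if i = j then e i else 0).sum
      = ∑ i ∈ Finset.range t, if i = j then e i else 0 := rfl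
  rw [this, Finset.sum_ite_eq' (Finset.range t) j e]
  simp [hj]

lemma key_coeff (t : ℕ) (e : ℕ → ℕ) (j : ℕ) (hj : j ∈ Finset.range t) :
    (∑ i ∈ Finset.range t, C ((e i : ℤ)) * X ^ i).coeff j = (e j : ℤ) := by
  rw [finset_sum_coeff]
  simp only [coeff_C_mul, coeff_X_pow]
  rw [Finset.sum_congr rfl (fun i _ => by rw [mul_ite, mul_one, mul_zero]),
    Finset.sum_ite_eq (Finset.range t) j (fun i => ((e i : ℤ)))]
  simp [hj]

/-- Let s be an ℕ-valued similarity function and h_i(G) ℕ-valued graph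
parameters, P(G;X) = ∑_{i=0}^{s(G)} h_i(G) Xⁱ and
P₃(G;X) = ∏_{i=0}^{s(G)} (X − i)^{h_i(G)+1}. Then P₃ is d.p.-equivalent to P and every
complex root of P₃(G;X) is a nonnegative integer. -/
theorem stmt_9 (s : ∀ n : ℕ, SimpleGraph (Fin n) → ℕ)
    (hs : ∀ (n₁ n₂ : ℕ) (G₁ : SimpleGraph (Fin n₁)) (G₂ : SimpleGraph (Fin n₂)),
        GraphSimilar G₁ G₂ → s n₁ G₁ = s n₂ G₂)
    (h : ∀ n : ℕ, SimpleGraph (Fin n) → ℕ → ℕ)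
    (P P₃ : ∀ n : ℕ, SimpleGraph (Fin n) → Polynomial ℤ)
    (hP : ∀ (n : ℕ) (G : SimpleGraph (Fin n)),
        P n G = ∑ i ∈ Finset.range (s n G + 1), C ((h n G i : ℤ)) * X ^ i)
    (hP₃ : ∀ (n : ℕ) (G : SimpleGraph (Fin n)),
        P₃ n G = ∏ i ∈ Finset.range (s n G + 1), (X - C ((i : ℤ))) ^ (h n G i + 1)) :
    DPEquiv P P₃ ∧
    ∀ (n : ℕ) (G : SimpleGraph (Fin n)) (z : ℂ),
      aeval z (P₃ n G) = 0 → ∃ m : ℕ, z = (m : ℂ) := by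
  constructor
  · intro n₁ n₂ G₁ G₂ hsim
    have hseq : s n₁ G₁ = s n₂ G₂ := hs _ _ _ _ hsim
    constructor
    · intro hPeq
      rw [hP₃, hP₃, ← hseq]
      apply Finset.prod_congr rfl
      intro i hi
      have : h n₁ G₁ i = h n₂ G₂ i := by
        have c1 := key_coeff (s n₁ G₁ + 1) (h n₁ G₁) i hi
        have c2 := key_coeff (s n₂ G₂ + 1) (h n₂ G₂) i (hseq ▸ hi)
        rw [← hP] at c1 c2
        rw [hPeq] at c1
        exact_mod_cast c1.symm.trans c2
      rw [this]
    · intro hPeq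
      rw [hP, hP, ← hseq]
      apply Finset.sum_congr rfl
      intro i hi
      have : h n₁ G₁ i = h n₂ G₂ i := by
        have c1 := key_count (s n₁ G₁ + 1) (fun i => h n₁ G₁ i + 1) i hi
        have c2 := key_count (s n₂ G₂ + 1) (fun i => h n₂ G₂ i + 1) i (hseq ▸ hi)
        rw [← hP₃] at c1 c2
        rw [hPeq] at c1
        omega
      rw [this]
  · intro n G z hz
    rw [hP₃, map_prod] at hz
    obtain ⟨i, hi, hzi⟩ := Finset.prod_eq_zero_iff.1 hz
    refine ⟨i, ?_⟩
    simp only [map_pow, map_sub, aeval_X, aeval_C] at hzi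
    have h0 := pow_eq_zero_iff (n := h n G i + 1) (by omega) |>.1 hzi
    have : z = algebraMap ℤ ℂ i := by linear_combination h0
    simpa using this
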